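/- For every real number x > 0, letting g(x) = x - ln(1+x), the quantity f(x,c) = c·g(x) + √(2·g(x)) - x is strictly negative for c = 2/3 and strictly positive for c = 1; moreover f(x,c) < 0 for every c ≤ 2/3 and f(x,c) > 0 for every c ≥ 1. -/

import Mathlib

private lemma pos_of_deriv {F F' : ℝ → ℝ} (h0 : F 0 = 0)
    (hd : ∀ y ∈ Set.Ici (0:ℝ), HasDerivAt F (F' y) y)
    (hpos : ∀ y ∈ Set.Ioi (0:ℝ), 0 < F' y) {x : ℝ} (hx : 0 < x) : 0 < F x := by
  have hmono : StrictMonoOn F (Set.Ici 0) := by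
    apply strictMonoOn_of_deriv_pos (convex_Ici 0)
      (fun y hy => (hd y hy).continuousAt.continuousWithinAt)
    intro y hy
    rw [interior_Ici] at hy
    rw [(hd y (Set.mem_Ici.mpr (le_of_lt hy))).deriv]
    exact hpos y hy
  have := hmono Set.self_mem_Ici (le_of_lt hx : (0:ℝ) ≤ x) hx
  linarith [this]

private lemma hasDerivAt_log1p {y : ℝ} (hy : 0 ≤ y) :
    HasDerivAt (fun z : ℝ => Real.log (1 + z)) (1 / (1 + y)) y := by
  have h1 : (1:ℝ) + y ≠ 0 := by positivity
  simpa using ((hasDerivAt_id y).const_add 1).log h1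

private lemma lemA (x : ℝ) (hx : 0 < x) :
    0 < 2*x - 2*Real.log (1+x) - (Real.log (1+x))^2 := by
  apply pos_of_deriv (F' := fun y => 2 - (2 + 2*Real.log (1+y))/(1+y)) (by simp) _ _ hx
  · intro y hy
    have h1 : (1:ℝ) + y ≠ 0 := by simp at hy; positivity
    have h := (((hasDerivAt_id y).const_mul 2).sub ((hasDerivAt_log1p hy).const_mul 2)).sub
      ((hasDerivAt_log1p hy).pow 2)
    refine h.congr_deriv ?_
    field_simp
    ring
  · intro y hy
    simp only [Set.mem_Ioi] at hy
    have h1 : (0:ℝ) < 1 + y := by linarith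
    have hL : Real.log (1+y) < y := by
      have := Real.log_lt_sub_one_of_pos (by linarith : (0:ℝ) < 1 + y) (by linarith)
      linarith
    rw [sub_pos, div_lt_iff₀ h1]
    linarith

private lemma lemB2 (x : ℝ) (hx : 0 < x) :
    0 < (x+3)^2 + (1+x)*(x + 2*Real.log (1+x) - 9) := by
  apply pos_of_deriv (F' := fun y => 4*y + 2*Real.log (1+y)) (by norm_num) _ _ hx
  · intro y hy
    have h1 : (1:ℝ) + y ≠ 0 := by simp at hy; positivity
    have h := (((hasDerivAt_id y).add_const 3).pow 2).add
      (((hasDerivAt_id y).const_add 1).mul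
        (((hasDerivAt_id y).add ((hasDerivAt_log1p hy).const_mul 2)).sub_const 9))
    refine h.congr_deriv ?_
    simp only [Pi.add_apply, id]
    field_simp
    ring
  · intro y hy
    simp only [Set.mem_Ioi] at hy
    have hL : 0 < Real.log (1+y) := Real.log_pos (by linarith)
    show 0 < 4*y + 2*Real.log (1+y)
    linarith

private lemma lemB3 (x : ℝ) (hx : 0 < x) :
    0 < (x + 2*Real.log (1+x))*(x+3) - 9*x := by
  apply pos_of_deriv
    (F' := fun y => ((y+3)^2 + (1+y)*(y + 2*Real.log (1+y) - 9))/(1+y)) (by simp) _ _ hx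
  · intro y hy
    have hy0 : (0:ℝ) ≤ y := hy
    have h1 : (1:ℝ) + y ≠ 0 := by positivity
    have h := ((((hasDerivAt_id y).add ((hasDerivAt_log1p hy0).const_mul 2)).mul
      ((hasDerivAt_id y).add_const 3)).sub ((hasDerivAt_id y).const_mul 9))
    refine h.congr_deriv ?_
    simp only [Pi.add_apply, id]
    field_simp
    ring
  · intro y hy
    simp only [Set.mem_Ioi] at hy
    exact div_pos (lemB2 y hy) (by linarith)

private lemma lemB (x : ℝ) (hx : 0 < x) :
    18*(x - Real.log (1+x)) < (x + 2*Real.log (1+x))^2 := by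
  have h : 0 < (x + 2*Real.log (1+x))^2 - 18*(x - Real.log (1+x)) := by
    apply pos_of_deriv
      (F' := fun y => 2*((y + 2*Real.log (1+y))*(y+3) - 9*y)/(1+y)) (by norm_num) _ _ hx
    · intro y hy
      have hy0 : (0:ℝ) ≤ y := hy
      have h1 : (1:ℝ) + y ≠ 0 := by positivity
      have h := ((((hasDerivAt_id y).add ((hasDerivAt_log1p hy0).const_mul 2)).pow 2).sub
        (((hasDerivAt_id y).sub (hasDerivAt_log1p hy0)).const_mul 18))
      refine h.congr_deriv ?_
      simp only [Pi.add_apply, id]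
      field_simp
      ring
    · intro y hy
      simp only [Set.mem_Ioi] at hy
      apply div_pos (by linarith [lemB3 y hy]) (by linarith)
  linarith

theorem f_sign (x : ℝ) (hx : 0 < x) :
    (2 / 3 * (x - Real.log (1 + x)) + Real.sqrt (2 * (x - Real.log (1 + x))) - x < 0) ∧
    (1 * (x - Real.log (1 + x)) + Real.sqrt (2 * (x - Real.log (1 + x))) - x > 0) ∧
    (∀ c : ℝ, c ≤ 2 / 3 →
      c * (x - Real.log (1 + x)) + Real.sqrt (2 * (x - Real.log (1 + x))) - x < 0) ∧
    (∀ c : ℝ, 1 ≤ c →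
      c * (x - Real.log (1 + x)) + Real.sqrt (2 * (x - Real.log (1 + x))) - x > 0) := by
  set L := Real.log (1 + x) with hLdef
  have hL0 : 0 < L := Real.log_pos (by linarith)
  have hLx : L < x := by
    have := Real.log_lt_sub_one_of_pos (by linarith : (0:ℝ) < 1 + x) (by linarith)
    linarith
  have hg : 0 < x - L := by linarith
  have hA := lemA x hx
  have hB := lemB x hx
  have h1 : L < Real.sqrt (2 * (x - L)) := by
    rw [Real.lt_sqrt hL0.le]
    linarith
  have h2 : Real.sqrt (2 * (x - L)) < (x + 2*L)/3 := by
    rw [show (x + 2*L)/3 = Real.sqrt (((x + 2*L)/3)^2) by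
      rw [Real.sqrt_sq (by positivity)]]
    apply Real.sqrt_lt_sqrt (by positivity)
    nlinarith
  refine ⟨by linarith, by linarith, ?_, ?_⟩
  · intro c hc
    nlinarith [mul_le_mul_of_nonneg_right hc hg.le]
  · intro c hc
    nlinarith [mul_le_mul_of_nonneg_right hc hg.le]
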